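/- (Frobenius) For every integer k ≥ 1, all roots of the Euler–Frobenius polynomial E_k are real, negative and distinct: there exist real numbers q_1 < q_2 < ⋯ < q_k < 0 such that E_k(x) = ∏_{j=1}^{k} (x − q_j). -/

import Mathlib

open Finset Polynomial

noncomputable section

/-- Euler's formula for the coefficients of the Euler–Frobenius polynomial `E_k`. -/
def efCoeff (k s : ℕ) : ℤ :=
  ∑ j ∈ Finset.range (s + 1),
    (-1) ^ j * ((k + 2).choose j : ℤ) * ((s + 1 - j : ℕ) : ℤ) ^ (k + 1)

/-- The Euler–Frobenius polynomial `E_k` as a real polynomial. -/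
def efPoly (k : ℕ) : Polynomial ℝ :=
  ∑ s ∈ Finset.range (k + 1), Polynomial.C ((efCoeff k s : ℝ)) * Polynomial.X ^ s

lemma choose_id (a b i : ℕ) :
    ((a:ℤ)+1) * (b.choose (i+1)) - ((b:ℤ)-a) * (b.choose i)
      = ((b+1).choose (i+1)) * ((a:ℤ) - i) := by
  have h1 : ((b:ℤ)+1) * (b.choose i) = ((b+1).choose (i+1)) * ((i:ℤ)+1) := by
    exact_mod_cast congrArg (Nat.cast : ℕ → ℤ) (Nat.add_one_mul_choose_eq b i)
  have h2 : (((b+1).choose (i+1) : ℤ)) = (b.choose i) + (b.choose (i+1)) := by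
    exact_mod_cast congrArg (Nat.cast : ℕ → ℤ) (Nat.choose_succ_succ' b i)
  linear_combination -h1 - ((a:ℤ)+1) * h2

lemma efCoeff_rec (k s : ℕ) :
    efCoeff (k+1) (s+1) = ((s:ℤ)+2) * efCoeff k (s+1) + ((k:ℤ)+1-s) * efCoeff k s := by
  unfold efCoeff
  rw [Finset.sum_range_succ' (fun j => (-1:ℤ)^j * ((k+1+2).choose j : ℤ) * ((s+1+1-j : ℕ):ℤ) ^ (k+1+1)),
    Finset.sum_range_succ' (fun j => (-1:ℤ)^j * ((k+2).choose j : ℤ) * ((s+1+1-j : ℕ):ℤ) ^ (k+1)),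
    Finset.mul_sum]
  have key : ∀ i ∈ Finset.range (s+1),
      (-1:ℤ)^(i+1) * ((k+3).choose (i+1) : ℤ) * ((s+2-(i+1) : ℕ):ℤ) ^ (k+2)
        = ((s:ℤ)+2) * ((-1:ℤ)^(i+1) * ((k+2).choose (i+1) : ℤ) * ((s+2-(i+1) : ℕ):ℤ) ^ (k+1))
          + ((k:ℤ)+1-s) * ((-1:ℤ)^i * ((k+2).choose i : ℤ) * ((s+1-i : ℕ):ℤ) ^ (k+1)) := by
    intro i hi
    rw [Finset.mem_range] at hi
    have hle : i ≤ s := Nat.lt_succ_iff.mp hi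
    have e1 : s + 2 - (i+1) = s + 1 - i := by omega
    have e2 : ((s + 1 - i : ℕ) : ℤ) = (s:ℤ) + 1 - i := by
      have : i ≤ s + 1 := by omega
      push_cast [this]; ring
    rw [e1]
    have hpow : ((s+1-i : ℕ):ℤ) ^ (k+2) = ((s+1-i : ℕ):ℤ) * ((s+1-i : ℕ):ℤ) ^ (k+1) := by
      ring
    rw [hpow, e2]
    have hid := choose_id (s+1) (k+2) i
    push_cast at hid ⊢
    linear_combination (-(-1:ℤ)^(i+1) * ((s:ℤ)+1-(i:ℤ))^(k+1)) * hid
  rw [Finset.sum_congr rfl key, Finset.sum_add_distrib, mul_add, Finset.mul_sum]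
  push_cast [Nat.choose_zero_right]
  ring

lemma efCoeff_zero (k : ℕ) : efCoeff k 0 = 1 := by
  simp [efCoeff]

lemma efCoeff_vanish : ∀ k s : ℕ, k < s → efCoeff k s = 0 := by
  intro k
  induction k with
  | zero =>
    intro s hs
    match s, hs with
    | 1, _ => norm_num [efCoeff, Finset.sum_range_succ]
    | (t+2), _ =>
      unfold efCoeff
      rw [← Finset.sum_subset (Finset.range_subset_range.mpr (by omega : 3 ≤ t+2+1))
        (fun j _ hj => by
          have h3 : 3 ≤ j := by simpa using hj
          have : (2).choose j = 0 := Nat.choose_eq_zero_of_lt (by omega)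
          simp [this])]
      rw [Finset.sum_range_succ, Finset.sum_range_succ, Finset.sum_range_succ]
      have e1 : t + 2 + 1 - 1 = t + 2 := by omega
      have e2 : t + 2 + 1 - 2 = t + 1 := by omega
      rw [e1, e2]
      simp [Nat.choose]
      ring
  | succ k ih =>
    intro s hs
    match s, hs with
    | (s'+1), hs =>
      rw [efCoeff_rec]
      rw [ih (s'+1) (by omega), ih s' (by omega)]
      ring

lemma efCoeff_diag (k : ℕ) : efCoeff k k = 1 := by
  induction k with
  | zero => norm_num [efCoeff]
  | succ k ih =>
    rw [efCoeff_rec, ih, efCoeff_vanish k (k+1) (by omega)]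
    ring

lemma efPoly_coeff (k s : ℕ) : (efPoly k).coeff s = ((efCoeff k s : ℤ) : ℝ) := by
  unfold efPoly
  rw [Polynomial.finset_sum_coeff]
  simp only [Polynomial.coeff_C_mul, Polynomial.coeff_X_pow, mul_ite, mul_one, mul_zero]
  rw [Finset.sum_ite_eq (Finset.range (k+1)) s]
  split
  · rfl
  · rename_i h
    have hks : k < s := by
      by_contra hc
      exact h (Finset.mem_range.mpr (by omega))
    rw [efCoeff_vanish k s hks]
    simp

lemma efPoly_natDegree (k : ℕ) : (efPoly k).natDegree = k := by
  apply le_antisymm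
  · apply Polynomial.natDegree_le_iff_coeff_eq_zero.mpr
    intro m hm
    rw [efPoly_coeff, efCoeff_vanish k m hm]
    simp
  · apply Polynomial.le_natDegree_of_ne_zero
    rw [efPoly_coeff, efCoeff_diag]
    norm_num

lemma efPoly_monic (k : ℕ) : (efPoly k).Monic := by
  unfold Polynomial.Monic Polynomial.leadingCoeff
  rw [efPoly_natDegree, efPoly_coeff, efCoeff_diag]
  norm_num

lemma efPoly_rec (k : ℕ) :
    efPoly (k+1) = (1 + Polynomial.C ((k:ℝ)+1) * X) * efPoly k
      + X * (1 - X) * Polynomial.derivative (efPoly k) := by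
  have expand : (1 + Polynomial.C ((k:ℝ)+1) * X) * efPoly k
      + X * (1 - X) * Polynomial.derivative (efPoly k)
      = efPoly k + Polynomial.C ((k:ℝ)+1) * (X * efPoly k)
        + X * Polynomial.derivative (efPoly k)
        - X * (X * Polynomial.derivative (efPoly k)) := by ring
  rw [expand]
  apply Polynomial.ext
  intro s
  simp only [Polynomial.coeff_add, Polynomial.coeff_sub, Polynomial.coeff_C_mul]
  match s with
  | 0 =>
    rw [Polynomial.mul_coeff_zero, Polynomial.mul_coeff_zero]
    simp only [Polynomial.coeff_X_zero, zero_mul, mul_zero]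
    rw [efPoly_coeff, efPoly_coeff, efCoeff_zero, efCoeff_zero]
    norm_num
  | 1 =>
    rw [Polynomial.coeff_X_mul, Polynomial.coeff_X_mul, Polynomial.coeff_X_mul,
      Polynomial.mul_coeff_zero]
    simp only [Polynomial.coeff_X_zero, zero_mul]
    rw [Polynomial.coeff_derivative]
    simp only [efPoly_coeff]
    have h := efCoeff_rec k 0
    have h' : ((efCoeff (k+1) 1 : ℤ) : ℝ)
        = ((0:ℝ)+2) * ((efCoeff k 1 : ℤ) : ℝ) + ((k:ℝ)+1-0) * ((efCoeff k 0 : ℤ) : ℝ) := by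
      exact_mod_cast h
    push_cast at h' ⊢
    linear_combination h'
  | (u+2) =>
    rw [Polynomial.coeff_X_mul, Polynomial.coeff_X_mul, Polynomial.coeff_X_mul,
      Polynomial.coeff_X_mul]
    rw [Polynomial.coeff_derivative, Polynomial.coeff_derivative]
    simp only [efPoly_coeff]
    have h := efCoeff_rec k (u+1)
    have h' : ((efCoeff (k+1) (u+2) : ℤ) : ℝ)
        = (((u:ℝ)+1)+2) * ((efCoeff k (u+2) : ℤ) : ℝ)
          + ((k:ℝ)+1-((u:ℝ)+1)) * ((efCoeff k (u+1) : ℤ) : ℝ) := by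
      exact_mod_cast h
    push_cast at h' ⊢
    linear_combination h'

/-- IVT for polynomials on an interval where eval changes sign. -/
lemma exists_root_Ioo (Q : Polynomial ℝ) {a b : ℝ} (hab : a < b)
    (h : Polynomial.eval a Q * Polynomial.eval b Q < 0) :
    ∃ x ∈ Set.Ioo a b, Polynomial.eval x Q = 0 := by
  have hc : ContinuousOn (fun x => Polynomial.eval x Q) (Set.Icc a b) :=
    (Polynomial.continuous_aeval Q).continuousOn
  rcases lt_or_ge (Polynomial.eval a Q) 0 with ha | ha
  · have hb : 0 < Polynomial.eval b Q := by nlinarith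
    have := intermediate_value_Ioo hab.le hc
    have h0 : (0:ℝ) ∈ Set.Ioo (Polynomial.eval a Q) (Polynomial.eval b Q) := ⟨ha, hb⟩
    obtain ⟨x, hx, hx0⟩ := this h0
    exact ⟨x, hx, hx0⟩
  · have ha' : 0 < Polynomial.eval a Q := by
      rcases ha.lt_or_eq with h1 | h1
      · exact h1
      · exfalso; rw [← h1] at h; simp at h
    have hb : Polynomial.eval b Q < 0 := by nlinarith
    have := intermediate_value_Ioo' hab.le hc
    have h0 : (0:ℝ) ∈ Set.Ioo (Polynomial.eval b Q) (Polynomial.eval a Q) := ⟨hb, ha'⟩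
    obtain ⟨x, hx, hx0⟩ := this h0
    exact ⟨x, hx, hx0⟩

/-- A chain of sign alternations produces a chain of roots. -/
lemma exists_roots_chain (Q : Polynomial ℝ) (m : ℕ) (t : Fin (m+1) → ℝ)
    (ht : StrictMono t)
    (hsign : ∀ j : Fin (m+1), 0 < (-1:ℝ)^(m - (j:ℕ)) * Polynomial.eval (t j) Q) :
    ∃ r : Fin m → ℝ, StrictMono r ∧
      (∀ j : Fin m, t j.castSucc < r j ∧ r j < t j.succ) ∧
      (∀ j : Fin m, Polynomial.eval (r j) Q = 0) := by
  have hroot : ∀ j : Fin m, ∃ x ∈ Set.Ioo (t j.castSucc) (t j.succ),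
      Polynomial.eval x Q = 0 := by
    intro j
    apply exists_root_Ioo Q (ht (Fin.castSucc_lt_succ : j.castSucc < j.succ))
    have h1 := hsign j.castSucc
    have h2 := hsign j.succ
    have hj : (j:ℕ) < m := j.isLt
    have e1 : (j.castSucc : ℕ) = (j:ℕ) := rfl
    have e2 : (j.succ : ℕ) = (j:ℕ) + 1 := rfl
    rw [e1] at h1
    rw [e2] at h2
    have e3 : m - (j:ℕ) = (m - ((j:ℕ)+1)) + 1 := by omega
    rw [e3, pow_succ] at h1
    set u : ℝ := (-1:ℝ)^(m - ((j:ℕ)+1)) with hu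
    have huu : u * u = 1 := by
      rw [hu, ← pow_add]
      exact Even.neg_one_pow ⟨_, rfl⟩
    nlinarith [h1, h2]
  choose r hr1 hr2 using hroot
  refine ⟨r, ?_, ?_, hr2⟩
  · match m, t, ht, hsign, r, hr1, hr2 with
    | 0, t, ht, hsign, r, hr1, hr2 => exact fun a => a.elim0
    | (m+1), t, ht, hsign, r, hr1, hr2 =>
    rw [Fin.strictMono_iff_lt_succ]
    intro i
    have a1 := (hr1 i.castSucc).2
    have a2 := (hr1 i.succ).1
    have e : i.castSucc.succ = i.succ.castSucc := Fin.succ_castSucc i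
    rw [e] at a1
    exact a1.trans a2
  · intro j
    exact ⟨(hr1 j).1, (hr1 j).2⟩

lemma efPoly_factor : ∀ k : ℕ, ∃ q : Fin k → ℝ, StrictMono q ∧ (∀ j, q j < 0) ∧
    efPoly k = ∏ j : Fin k, (X - Polynomial.C (q j)) := by
  intro k
  induction k with
  | zero =>
    refine ⟨Fin.elim0, fun a => a.elim0, fun a => a.elim0, ?_⟩
    norm_num [efPoly, efCoeff]
  | succ k ih =>
    obtain ⟨q, hmono, hneg, hprod⟩ := ih
    have hnodal : efPoly k = Lagrange.nodal Finset.univ q := hprod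
    have hevalP : ∀ x : ℝ, Polynomial.eval x (efPoly k) = ∏ j : Fin k, (x - q j) := by
      intro x
      rw [hnodal, Lagrange.eval_nodal]
    have hQeval : ∀ x : ℝ, Polynomial.eval x (efPoly (k+1))
        = (1 + ((k:ℝ)+1)*x) * Polynomial.eval x (efPoly k)
          + x*(1-x)*Polynomial.eval x (Polynomial.derivative (efPoly k)) := by
      intro x
      rw [efPoly_rec k]
      simp only [Polynomial.eval_add, Polynomial.eval_mul, Polynomial.eval_one,
        Polynomial.eval_sub, Polynomial.eval_X, Polynomial.eval_C]
    -- sign at 0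
    have h0 : 0 < Polynomial.eval 0 (efPoly (k+1)) := by
      rw [hQeval, hevalP]
      have : (0:ℝ) < ∏ j : Fin k, (0 - q j) := by
        apply Finset.prod_pos
        intro j _
        have := hneg j
        linarith
      simpa using this
    -- sign at q i
    have hqi : ∀ i : Fin k, 0 < (-1:ℝ)^(k - (i:ℕ)) * Polynomial.eval (q i) (efPoly (k+1)) := by
      intro i
      have hPzero : Polynomial.eval (q i) (efPoly k) = 0 := by
        rw [hevalP]
        exact Finset.prod_eq_zero (Finset.mem_univ i) (sub_self (q i))
      have hP' : Polynomial.eval (q i) (Polynomial.derivative (efPoly k))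
          = ∏ j ∈ Finset.univ.erase i, (q i - q j) := by
        rw [hnodal, Lagrange.eval_nodal_derivative_eval_node_eq (Finset.mem_univ i),
          Lagrange.eval_nodal]
      have hsplit : Finset.univ.erase i = Finset.Iio i ∪ Finset.Ioi i := by
        ext j
        simp only [Finset.mem_erase, Finset.mem_univ, and_true, Finset.mem_union,
          Finset.mem_Iio, Finset.mem_Ioi]
        exact ne_iff_lt_or_gt
      have hdisj : Disjoint (Finset.Iio i) (Finset.Ioi i) := by
        rw [Finset.disjoint_left]
        intro j hj1 hj2
        simp only [Finset.mem_Iio] at hj1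
        simp only [Finset.mem_Ioi] at hj2
        exact absurd (hj1.trans hj2) (lt_irrefl j)
      have hprodsplit : ∏ j ∈ Finset.univ.erase i, (q i - q j)
          = (∏ j ∈ Finset.Iio i, (q i - q j)) * ∏ j ∈ Finset.Ioi i, (q i - q j) := by
        rw [hsplit, Finset.prod_union hdisj]
      have hIio : 0 < ∏ j ∈ Finset.Iio i, (q i - q j) := by
        apply Finset.prod_pos
        intro j hj
        simp only [Finset.mem_Iio] at hj
        have := hmono hj
        linarith
      have hIoi : ∏ j ∈ Finset.Ioi i, (q i - q j)
          = (-1:ℝ)^(k - 1 - (i:ℕ)) * ∏ j ∈ Finset.Ioi i, (q j - q i) := by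
        rw [← Fin.card_Ioi i, ← Finset.prod_const ((-1:ℝ)), ← Finset.prod_mul_distrib]
        apply Finset.prod_congr rfl
        intro j _
        ring
      have hIoiPos : 0 < ∏ j ∈ Finset.Ioi i, (q j - q i) := by
        apply Finset.prod_pos
        intro j hj
        simp only [Finset.mem_Ioi] at hj
        have := hmono hj
        linarith
      have hfac : 0 < (-1:ℝ)^(k - 1 - (i:ℕ))
          * Polynomial.eval (q i) (Polynomial.derivative (efPoly k)) := by
        rw [hP', hprodsplit, hIoi]
        have hu : (-1:ℝ)^(k - 1 - (i:ℕ)) * (-1:ℝ)^(k - 1 - (i:ℕ)) = 1 := by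
          rw [← pow_add]
          exact Even.neg_one_pow ⟨_, rfl⟩
        have hrw : (-1:ℝ)^(k - 1 - (i:ℕ)) * ((∏ j ∈ Finset.Iio i, (q i - q j))
              * ((-1:ℝ)^(k - 1 - (i:ℕ)) * ∏ j ∈ Finset.Ioi i, (q j - q i)))
            = ((-1:ℝ)^(k - 1 - (i:ℕ)) * (-1:ℝ)^(k - 1 - (i:ℕ)))
              * ((∏ j ∈ Finset.Iio i, (q i - q j)) * ∏ j ∈ Finset.Ioi i, (q j - q i)) := by
          ring
        rw [hrw, hu, one_mul]
        exact mul_pos hIio hIoiPos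
      have hQqi : Polynomial.eval (q i) (efPoly (k+1))
          = q i * (1 - q i) * Polynomial.eval (q i) (Polynomial.derivative (efPoly k)) := by
        rw [hQeval, hPzero]
        ring
      have hneg_fac : q i * (1 - q i) < 0 := by
        have h1 := hneg i
        nlinarith [h1]
      have hexp : k - (i:ℕ) = (k - 1 - (i:ℕ)) + 1 := by
        have := i.isLt
        omega
      rw [hexp, pow_succ, hQqi]
      nlinarith [mul_pos (neg_pos.mpr hneg_fac) hfac]
    -- sign near -infinity
    have hM : ∃ M : ℝ, M < 0 ∧ (∀ j : Fin k, M < q j) ∧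
        0 < (-1:ℝ)^(k+1) * Polynomial.eval M (efPoly (k+1)) := by
      have hQmonic : (efPoly (k+1)).Monic := efPoly_monic (k+1)
      have hQdeg : (efPoly (k+1)).natDegree = k+1 := efPoly_natDegree (k+1)
      set R := Polynomial.C ((-1:ℝ)^(k+1)) * (efPoly (k+1)).comp (-Polynomial.X) with hR
      have hcompdeg : ((efPoly (k+1)).comp (-Polynomial.X)).natDegree = k + 1 := by
        rw [Polynomial.natDegree_comp, hQdeg]
        simp
      have hlc : R.leadingCoeff = 1 := by
        rw [hR, Polynomial.leadingCoeff_mul, Polynomial.leadingCoeff_C,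
          Polynomial.leadingCoeff_comp (by simp : (-Polynomial.X : Polynomial ℝ).natDegree ≠ 0)]
        rw [hQmonic.leadingCoeff, hQdeg]
        simp only [Polynomial.leadingCoeff_neg, Polynomial.leadingCoeff_X, one_mul]
        rw [← pow_add]
        exact Even.neg_one_pow ⟨_, rfl⟩
      have hRne : R ≠ 0 := by
        intro h
        rw [h] at hlc
        simp at hlc
      have hRdeg : 0 < R.degree := by
        rw [Polynomial.degree_eq_natDegree hRne]
        have hone : R.natDegree = k + 1 := by
          rw [hR, Polynomial.natDegree_C_mul (pow_ne_zero _ (by norm_num : (-1:ℝ) ≠ 0))]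
          exact hcompdeg
        rw [hone]
        exact_mod_cast Nat.succ_pos k
      have htend : Filter.Tendsto (fun x => Polynomial.eval x R) Filter.atTop Filter.atTop :=
        Polynomial.tendsto_atTop_of_leadingCoeff_nonneg R hRdeg (by rw [hlc]; norm_num)
      set b : ℝ := 1 + ∑ j : Fin k, |q j| with hb
      have hbpos : 0 < b := by
        rw [hb]
        have : 0 ≤ ∑ j : Fin k, |q j| := Finset.sum_nonneg fun j _ => abs_nonneg _
        linarith
      obtain ⟨x, hx⟩ := ((htend.eventually_gt_atTop 0).and (Filter.eventually_ge_atTop b)).exists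
      refine ⟨-x, ?_, ?_, ?_⟩
      · linarith [hx.2, hbpos]
      · intro j
        have h1 : |q j| ≤ ∑ j' : Fin k, |q j'| :=
          Finset.single_le_sum (fun j' _ => abs_nonneg (q j')) (Finset.mem_univ j)
        have h2 : -q j ≤ |q j| := neg_le_abs _
        have h3 := hx.2
        rw [hb] at h3
        linarith
      · have hev : Polynomial.eval x R = (-1:ℝ)^(k+1) * Polynomial.eval (-x) (efPoly (k+1)) := by
          rw [hR]
          simp [Polynomial.eval_comp]
        rw [← hev]
        exact hx.1
    obtain ⟨M, hM0, hMq, hMsign⟩ := hM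
    -- the chain of points
    set t : Fin (k+2) → ℝ := fun j =>
      if h1 : (j:ℕ) = 0 then M else if h2 : (j:ℕ) < k+1 then q ⟨(j:ℕ)-1, by omega⟩ else 0 with htdef
    have htmono : StrictMono t := by
      intro a b hab
      have hab' : (a:ℕ) < (b:ℕ) := hab
      simp only [htdef]
      split_ifs with h1 h2 h3 h4 h5 h6
      · omega
      · exact hMq _
      · exact hM0
      · omega
      · exact hmono (show (⟨(a:ℕ)-1, by omega⟩ : Fin k) < ⟨(b:ℕ)-1, by omega⟩ from by
          simp only [Fin.lt_def]
          omega)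
      · exact hneg _
      · omega
      · omega
      · omega
    have htsign : ∀ j : Fin (k+2),
        0 < (-1:ℝ)^(k+1 - (j:ℕ)) * Polynomial.eval (t j) (efPoly (k+1)) := by
      intro j
      by_cases h1 : (j:ℕ) = 0
      · have : t j = M := by simp only [htdef]; rw [dif_pos h1]
        rw [this, h1]
        exact hMsign
      · by_cases h2 : (j:ℕ) < k+1
        · have hval : t j = q ⟨(j:ℕ)-1, by omega⟩ := by
            simp only [htdef]
            rw [dif_neg h1, dif_pos h2]
          rw [hval]
          have := hqi ⟨(j:ℕ)-1, by omega⟩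
          have hexp : k + 1 - (j:ℕ) = k - ((j:ℕ)-1) := by omega
          rw [hexp]
          exact this
        · have hval : t j = 0 := by
            simp only [htdef]
            rw [dif_neg h1, dif_neg h2]
          have hj : (j:ℕ) = k+1 := by
            have := j.isLt
            omega
          rw [hval, hj]
          simpa using h0
    obtain ⟨r, hrmono, hrbound, hrroot⟩ := exists_roots_chain (efPoly (k+1)) (k+1) t htmono htsign
    have htlast : t (Fin.last (k+1)) = 0 := by
      simp [htdef]
    have hrneg : ∀ j : Fin (k+1), r j < 0 := by
      intro j
      have h1 := (hrbound j).2
      have h2 : t j.succ ≤ t (Fin.last (k+1)) := htmono.monotone (Fin.le_last _)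
      rw [htlast] at h2
      linarith
    refine ⟨r, hrmono, hrneg, ?_⟩
    -- identification of the polynomial with the product over roots
    have hQmonic : (efPoly (k+1)).Monic := efPoly_monic (k+1)
    have hQdeg : (efPoly (k+1)).natDegree = k+1 := efPoly_natDegree (k+1)
    set N : Polynomial ℝ := ∏ j : Fin (k+1), (Polynomial.X - Polynomial.C (r j)) with hN
    have hNmonic : N.Monic :=
      Polynomial.monic_prod_of_monic _ _ fun i _ => Polynomial.monic_X_sub_C _
    have hNdeg : N.natDegree = k+1 := by
      rw [hN, Polynomial.natDegree_prod _ _ fun i _ => Polynomial.X_sub_C_ne_zero (r i)]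
      simp [Polynomial.natDegree_X_sub_C]
    have hNev : ∀ j : Fin (k+1), Polynomial.eval (r j) N = 0 := by
      intro j
      rw [hN, Polynomial.eval_prod]
      exact Finset.prod_eq_zero (Finset.mem_univ j) (by simp)
    have hsub : efPoly (k+1) - N = 0 := by
      by_cases hD : efPoly (k+1) - N = 0
      · exact hD
      · exfalso
        have hdeg : (efPoly (k+1) - N).degree < ((k+1 : ℕ) : WithBot ℕ) := by
          have hdd : (efPoly (k+1)).degree = N.degree := by
            rw [Polynomial.degree_eq_natDegree hQmonic.ne_zero,
              Polynomial.degree_eq_natDegree hNmonic.ne_zero, hQdeg, hNdeg]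
          have hll : (efPoly (k+1)).leadingCoeff = N.leadingCoeff := by
            rw [hQmonic.leadingCoeff, hNmonic.leadingCoeff]
          have h1 := Polynomial.degree_sub_lt hdd hQmonic.ne_zero hll
          rwa [Polynomial.degree_eq_natDegree hQmonic.ne_zero, hQdeg] at h1
        have hnd : (efPoly (k+1) - N).natDegree < k+1 :=
          (Polynomial.natDegree_lt_iff_degree_lt hD).mpr hdeg
        apply hD
        apply Polynomial.eq_zero_of_natDegree_lt_card_of_eval_eq_zero _ hrmono.injective
        · intro i
          rw [Polynomial.eval_sub, hrroot i, hNev i, sub_zero]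
        · rwa [Fintype.card_fin]
    have := sub_eq_zero.mp hsub
    rw [this]

/-- **Frobenius**: for `k ≥ 1` all roots of `E_k` are real, negative and distinct:
`E_k(x) = ∏_{j=1}^{k} (x − q_j)` with `q_1 < q_2 < ⋯ < q_k < 0`. -/
theorem efPoly_roots_real_neg_distinct :
    ∀ k : ℕ, 1 ≤ k → ∃ q : Fin k → ℝ, StrictMono q ∧ (∀ j, q j < 0) ∧
      efPoly k = ∏ j : Fin k, (Polynomial.X - Polynomial.C (q j)) := by
  intro k _
  exact efPoly_factor k
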